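/- Let (Ω, Σ, P) be a probability space, let k be a positive integer, let f : (a,b) → ℝ be a 2k-times differentiable function with f^(2k)(x) ≥ 0 for every x ∈ (a,b), and let X : Ω → (a,b) be an integrable random variable such that f(X) and f^(i)(X)·(X − E[X])^i are integrable for 1 ≤ i ≤ 2k−1. Then E[f(X)] − f(E[X]) ≤ −∑_{i=1}^{2k−1} ((−1)^i / i!) · E[f^(i)(X)·(X − E[X])^i]. -/

import Mathlib

open MeasureTheory ProbabilityTheory Finset


lemma real_lt_integral {Ω : Type*} [MeasurableSpace Ω] (P : Measure Ω) [IsProbabilityMeasure P]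
    (X : Ω → ℝ) (hXi : Integrable X P) (a : ℝ) (h : ∀ ω, a < X ω) :
    a < ∫ ω, X ω ∂P := by
  have hint : Integrable (fun ω => X ω - a) P := hXi.sub (integrable_const a)
  have h0 : 0 < ∫ ω, (X ω - a) ∂P := by
    rw [integral_pos_iff_support_of_nonneg (fun ω => sub_nonneg.2 (h ω).le) hint]
    have hs : Function.support (fun ω => X ω - a) = Set.univ :=
      Set.eq_univ_of_forall (fun ω => sub_ne_zero.2 (h ω).ne')
    simp [hs]
  rw [integral_sub hXi (integrable_const a), integral_const] at h0
  simp at h0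
  linarith

lemma ereal_lt_integral {Ω : Type*} [MeasurableSpace Ω] (P : Measure Ω) [IsProbabilityMeasure P]
    (X : Ω → ℝ) (hXi : Integrable X P) (a : EReal) (ha : a ≠ ⊤)
    (h : ∀ ω, a < (X ω : EReal)) : a < ((∫ ω, X ω ∂P : ℝ) : EReal) := by
  induction a using EReal.rec with
  | bot => exact EReal.bot_lt_coe _
  | coe a =>
      exact_mod_cast real_lt_integral P X hXi a (fun ω => by exact_mod_cast h ω)
  | top => exact absurd rfl ha

lemma ereal_integral_lt {Ω : Type*} [MeasurableSpace Ω] (P : Measure Ω) [IsProbabilityMeasure P]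
    (X : Ω → ℝ) (hXi : Integrable X P) (b : EReal) (hb : b ≠ ⊥)
    (h : ∀ ω, (X ω : EReal) < b) : ((∫ ω, X ω ∂P : ℝ) : EReal) < b := by
  induction b using EReal.rec with
  | bot => exact absurd rfl hb
  | coe b =>
      have hlt : ∀ ω, -b < -X ω := by
        intro ω
        have hx : X ω < b := by exact_mod_cast h ω
        linarith
      have := real_lt_integral P (fun ω => -X ω) hXi.neg (-b) hlt
      rw [integral_neg] at this
      exact_mod_cast (by linarith : (∫ ω, X ω ∂P) < b)
  | top => exact EReal.coe_lt_top _


lemma key_ineq (a b : EReal) (k : ℕ) (hk : 0 < k) (fd : ℕ → ℝ → ℝ)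
    (hderiv : ∀ i < 2 * k, ∀ x : ℝ, a < (x : EReal) → (x : EReal) < b →
      HasDerivAt (fd i) (fd (i + 1) x) x)
    (hnonneg : ∀ x : ℝ, a < (x : EReal) → (x : EReal) < b → 0 ≤ fd (2 * k) x)
    (μ : ℝ) (haμ : a < (μ : EReal)) (hμb : (μ : EReal) < b)
    (x : ℝ) (hax : a < (x : EReal)) (hxb : (x : EReal) < b) :
    fd 0 x ≤ fd 0 μ - ∑ i ∈ Finset.Icc 1 (2 * k - 1),
      ((-1 : ℝ) ^ i / (Nat.factorial i : ℝ)) * (fd i x * (x - μ) ^ i) := by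
  set n := 2 * k with hn
  have hn1 : 1 ≤ n := by omega
  set S : Set ℝ := {y | a < (y : EReal) ∧ (y : EReal) < b} with hS
  have hxS : x ∈ S := ⟨hax, hxb⟩
  have hμS : μ ∈ S := ⟨haμ, hμb⟩
  set h : ℝ → ℝ := fun y => ∑ i ∈ range n, fd i y * (μ - y) ^ i / (Nat.factorial i : ℝ)
    with hh
  set D : ℝ → ℝ := fun y => fd n y * (μ - y) ^ (n - 1) / (Nat.factorial (n - 1) : ℝ) with hD
  -- derivative of h on S
  have hder : ∀ y ∈ S, HasDerivAt h (D y) y := by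
    intro y hy
    set w : ℕ → ℝ := fun i => if i = 0 then 0 else
      fd i y * (μ - y) ^ (i - 1) / (Nat.factorial (i - 1) : ℝ) with hw
    have hterm : ∀ i ∈ range n,
        HasDerivAt (fun z => fd i z * (μ - z) ^ i / (Nat.factorial i : ℝ))
          (w (i + 1) - w i) y := by
      intro i hi
      have h1 : HasDerivAt (fd i) (fd (i + 1) y) y :=
        hderiv i (mem_range.1 hi) y hy.1 hy.2
      have h2 : HasDerivAt (fun z : ℝ => (μ - z) ^ i)
          ((i : ℝ) * (μ - y) ^ (i - 1) * (-1)) y :=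
        ((hasDerivAt_id y).const_sub μ).pow i
      have h3 : HasDerivAt (fun z => fd i z * (μ - z) ^ i / (Nat.factorial i : ℝ))
          ((fd (i + 1) y * (μ - y) ^ i + fd i y * ((i : ℝ) * (μ - y) ^ (i - 1) * (-1))) /
            (Nat.factorial i : ℝ)) y :=
        (h1.fun_mul h2).div_const (Nat.factorial i : ℝ)
      convert h3 using 1
      rcases i with _ | j
      · simp [hw]
      · have hfac : (Nat.factorial (j + 1) : ℝ) = (j + 1) * (Nat.factorial j : ℝ) := by
          exact_mod_cast Nat.factorial_succ j
        have hfj : (Nat.factorial j : ℝ) ≠ 0 := by positivity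
        simp only [hw, if_neg (Nat.succ_ne_zero _), Nat.succ_ne_zero, Nat.add_sub_cancel,
          Nat.succ_sub_one]
        rw [hfac]
        have hj1 : ((j : ℝ) + 1) ≠ 0 := by positivity
        field_simp
        push_cast
        ring
    have hsum := HasDerivAt.fun_sum hterm
    have htel : ∑ i ∈ range n, (w (i + 1) - w i) = D y := by
      rw [Finset.sum_range_sub]
      have hwn : w n = D y := by
        rw [hw, hD]
        simp only [if_neg (show n ≠ 0 by omega)]
      rw [hwn]
      simp [hw]
    rw [htel] at hsum
    exact hsum
  -- h attains max at μ on S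
  have hmax : h x ≤ h μ := by
    rcases le_total x μ with hxμ | hμx
    · have hsub : Set.Icc x μ ⊆ S := by
        intro y hy
        exact ⟨lt_of_lt_of_le hax (by exact_mod_cast hy.1),
               lt_of_le_of_lt (by exact_mod_cast hy.2 : (y : EReal) ≤ (μ : EReal)) hμb⟩
      have hmono : MonotoneOn h (Set.Icc x μ) := by
        apply monotoneOn_of_hasDerivWithinAt_nonneg (f' := D) (convex_Icc x μ)
        · exact fun y hy => (hder y (hsub hy)).continuousAt.continuousWithinAt
        · intro y hy
          rw [interior_Icc] at hy
          exact (hder y (hsub (Set.Ioo_subset_Icc_self hy))).hasDerivWithinAt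
        · intro y hy
          rw [interior_Icc] at hy
          have h0 : 0 ≤ fd n y := hnonneg y (hsub (Set.Ioo_subset_Icc_self hy)).1
            (hsub (Set.Ioo_subset_Icc_self hy)).2
          have h1 : (0:ℝ) ≤ (μ - y) ^ (n - 1) := pow_nonneg (by linarith [hy.2]) _
          have h2 : (0:ℝ) < (Nat.factorial (n-1) : ℝ) := by positivity
          simp only [hD]
          positivity
      exact hmono ⟨le_refl x, hxμ⟩ ⟨hxμ, le_refl μ⟩ hxμ
    · have hsub : Set.Icc μ x ⊆ S := by
        intro y hy
        exact ⟨lt_of_lt_of_le haμ (by exact_mod_cast hy.1),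
               lt_of_le_of_lt (by exact_mod_cast hy.2 : (y : EReal) ≤ (x : EReal)) hxb⟩
      have hanti : AntitoneOn h (Set.Icc μ x) := by
        apply antitoneOn_of_hasDerivWithinAt_nonpos (f' := D) (convex_Icc μ x)
        · exact fun y hy => (hder y (hsub hy)).continuousAt.continuousWithinAt
        · intro y hy
          rw [interior_Icc] at hy
          exact (hder y (hsub (Set.Ioo_subset_Icc_self hy))).hasDerivWithinAt
        · intro y hy
          rw [interior_Icc] at hy
          have h0 : 0 ≤ fd n y := hnonneg y (hsub (Set.Ioo_subset_Icc_self hy)).1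
            (hsub (Set.Ioo_subset_Icc_self hy)).2
          have hodd : Odd (n - 1) := ⟨k - 1, by omega⟩
          have h1 : (μ - y) ^ (n - 1) ≤ 0 := hodd.pow_nonpos (by linarith [hy.1])
          have h2 : (0:ℝ) < (Nat.factorial (n-1) : ℝ) := by positivity
          simp only [hD]
          apply div_nonpos_of_nonpos_of_nonneg _ h2.le
          exact mul_nonpos_of_nonneg_of_nonpos h0 h1
      exact hanti ⟨le_refl μ, hμx⟩ ⟨hμx, le_refl x⟩ hμx
  -- value at μ
  have hμval : h μ = fd 0 μ := by
    simp only [hh]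
    rw [Finset.sum_eq_single_of_mem 0 (mem_range.2 (show 0 < n by omega))]
    · simp
    · intro i _ hi0
      simp [zero_pow hi0, sub_self]
  -- expand h x
  have hxval : h x = fd 0 x + ∑ i ∈ Finset.Icc 1 (n - 1),
      fd i x * (μ - x) ^ i / (Nat.factorial i : ℝ) := by
    have hins : range n = insert 0 (Finset.Icc 1 (n - 1)) := by
      ext m
      simp only [Finset.mem_range, Finset.mem_insert, Finset.mem_Icc]
      omega
    simp only [hh]
    rw [hins, Finset.sum_insert (by simp)]
    simp
  -- rewrite sum
  have hsum_eq : ∑ i ∈ Finset.Icc 1 (n - 1), fd i x * (μ - x) ^ i / (Nat.factorial i : ℝ)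
      = ∑ i ∈ Finset.Icc 1 (n - 1),
          ((-1 : ℝ) ^ i / (Nat.factorial i : ℝ)) * (fd i x * (x - μ) ^ i) := by
    apply Finset.sum_congr rfl
    intro i _
    rw [show μ - x = -(x - μ) by ring, neg_pow]
    ring
  rw [hμval, hxval, hsum_eq] at hmax
  linarith

/-- Let `k ≥ 1`, let `f : (a,b) → ℝ` be a `2k`-times differentiable function
(with `i`-th derivative `fd i`, `fd 0 = f`) such that `f^{(2k)}(x) ≥ 0` on `(a,b)`, and let
`X : Ω → (a,b)` be an integrable random variable such that `f(X)` and
`f^{(i)}(X)·(X − E[X])^i` (`1 ≤ i ≤ 2k−1`) are integrable. Then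
`E[f(X)] − f(E[X]) ≤ −∑_{i=1}^{2k−1} ((−1)^i/i!)·E[f^{(i)}(X)·(X − E[X])^i]`. -/
theorem jensen_gap_higher_order_upper
    {Ω : Type*} [MeasurableSpace Ω] (P : Measure Ω) [IsProbabilityMeasure P]
    (a b : EReal) (hab : a < b) (k : ℕ) (hk : 0 < k)
    (f : ℝ → ℝ) (fd : ℕ → ℝ → ℝ) (hfd0 : fd 0 = f)
    (hderiv : ∀ i < 2 * k, ∀ x : ℝ, a < (x : EReal) → (x : EReal) < b →
      HasDerivAt (fd i) (fd (i + 1) x) x)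
    (hnonneg : ∀ x : ℝ, a < (x : EReal) → (x : EReal) < b → 0 ≤ fd (2 * k) x)
    (X : Ω → ℝ)
    (hX : ∀ ω, a < (X ω : EReal) ∧ (X ω : EReal) < b)
    (hXint : Integrable X P)
    (hfXint : Integrable (fun ω => f (X ω)) P)
    (hmom : ∀ i ∈ Finset.Icc 1 (2 * k - 1),
      Integrable (fun ω => fd i (X ω) * (X ω - ∫ ω', X ω' ∂P) ^ i) P) :
    (∫ ω, f (X ω) ∂P) - f (∫ ω, X ω ∂P)
      ≤ -∑ i ∈ Finset.Icc 1 (2 * k - 1),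
          ((-1 : ℝ) ^ i / (Nat.factorial i : ℝ)) *
            (∫ ω, fd i (X ω) * (X ω - ∫ ω', X ω' ∂P) ^ i ∂P) := by
  set μ : ℝ := ∫ ω, X ω ∂P with hμ
  have haμ : a < (μ : EReal) :=
    ereal_lt_integral P X hXint a hab.ne_top (fun ω => (hX ω).1)
  have hμb : (μ : EReal) < b :=
    ereal_integral_lt P X hXint b hab.ne_bot (fun ω => (hX ω).2)
  have hkey : ∀ ω, f (X ω) ≤ f μ - ∑ i ∈ Finset.Icc 1 (2 * k - 1),
      ((-1 : ℝ) ^ i / (Nat.factorial i : ℝ)) * (fd i (X ω) * (X ω - μ) ^ i) := by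
    intro ω
    have := key_ineq a b k hk fd hderiv hnonneg μ haμ hμb (X ω) (hX ω).1 (hX ω).2
    rwa [hfd0] at this
  have hsumint : Integrable (fun ω => ∑ i ∈ Finset.Icc 1 (2 * k - 1),
      ((-1 : ℝ) ^ i / (Nat.factorial i : ℝ)) * (fd i (X ω) * (X ω - μ) ^ i)) P :=
    integrable_finset_sum _ (fun i hi => (hmom i hi).const_mul _)
  have hgint : Integrable (fun ω => f μ - ∑ i ∈ Finset.Icc 1 (2 * k - 1),
      ((-1 : ℝ) ^ i / (Nat.factorial i : ℝ)) * (fd i (X ω) * (X ω - μ) ^ i)) P :=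
    (integrable_const (f μ)).sub hsumint
  have hmono := integral_mono hfXint hgint hkey
  have hgval : (∫ ω, (f μ - ∑ i ∈ Finset.Icc 1 (2 * k - 1),
      ((-1 : ℝ) ^ i / (Nat.factorial i : ℝ)) * (fd i (X ω) * (X ω - μ) ^ i)) ∂P)
      = f μ - ∑ i ∈ Finset.Icc 1 (2 * k - 1),
          ((-1 : ℝ) ^ i / (Nat.factorial i : ℝ)) *
            (∫ ω, fd i (X ω) * (X ω - μ) ^ i ∂P) := by
    rw [integral_sub (integrable_const (f μ)) hsumint, integral_const]
    simp only [measure_univ, ENNReal.toReal_one, probReal_univ, smul_eq_mul, one_mul]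
    congr 1
    rw [integral_finset_sum _ (fun i hi => (hmom i hi).const_mul _)]
    exact Finset.sum_congr rfl (fun i hi => integral_const_mul _ _)
  rw [hgval] at hmono
  linarith
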